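/- Let Y be a set and f_n : Y → {0,1} functions (n ∈ ℕ) such that for every b ∈ Y the sequence (f_n(b)) changes value at most m times, i.e., |{n : f_n(b) ≠ f_{n+1}(b)}| ≤ m. Then for every k ≥ 1, all r_1,...,r_k ∈ [0,1] with ∑ r_i = 1, all b_1,...,b_k ∈ Y, all 0 ≤ r < s ≤ 1, and all N > m/(s−r) + 1, there are no indices j_1 < ... < j_N such that ∑_i r_i f_{j_t}(b_i) ≤ r for odd t and ∑_i r_i f_{j_t}(b_i) ≥ s for even t. -/

import Mathlib

/-- {0,1}-valued version of Fact 3.7: a sequence of 0-1 valued functions each of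
whose value sequences changes at most `m` times is randomly convergent, i.e.
satisfies the alternation bound for all convex combinations of evaluations. -/
theorem stmt_14 {Y : Type*} (m : ℕ) (f : ℕ → Y → ℝ)
    (hf01 : ∀ n b, f n b = 0 ∨ f n b = 1)
    (hchange : ∀ b : Y, {n : ℕ | f n b ≠ f (n + 1) b}.Finite ∧
      {n : ℕ | f n b ≠ f (n + 1) b}.ncard ≤ m)
    (k : ℕ) (hk : 1 ≤ k) (w : Fin k → ℝ) (hw : ∀ i, w i ∈ Set.Icc (0 : ℝ) 1)
    (hwsum : ∑ i, w i = 1) (b : Fin k → Y)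
    (r s : ℝ) (hr : 0 ≤ r) (hrs : r < s) (hs : s ≤ 1)
    (N : ℕ) (hN : (N : ℝ) > (m : ℝ) / (s - r) + 1) :
    ¬ ∃ j : Fin N → ℕ, StrictMono j ∧
      ∀ t : Fin N, (Even t.val → ∑ i, w i * f (j t) (b i) ≤ r) ∧
        (¬ Even t.val → s ≤ ∑ i, w i * f (j t) (b i)) := by
  rintro ⟨j, hj, halt⟩
  set g : ℕ → ℝ := fun n => ∑ i, w i * f n (b i) with hg
  have hpos : 0 < s - r := by linarith
  have hm0 : (0:ℝ) ≤ (m:ℝ) / (s - r) := div_nonneg (Nat.cast_nonneg m) hpos.le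
  have hN2 : 2 ≤ N := by
    by_contra h
    push_neg at h
    interval_cases N <;> simp_all <;> linarith
  -- variation bound
  have hvar : ∀ S : Finset ℕ, ∑ n ∈ S, |g (n+1) - g n| ≤ (m:ℝ) := by
    intro S
    have h1 : ∀ n, |g (n+1) - g n| ≤ ∑ i, w i * |f (n+1) (b i) - f n (b i)| := by
      intro n
      have he : g (n+1) - g n = ∑ i, w i * (f (n+1) (b i) - f n (b i)) := by
        simp [hg, ← Finset.sum_sub_distrib, mul_sub]
      rw [he]
      calc |∑ i, w i * (f (n+1) (b i) - f n (b i))|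
          ≤ ∑ i, |w i * (f (n+1) (b i) - f n (b i))| := Finset.abs_sum_le_sum_abs _ _
        _ = ∑ i, w i * |f (n+1) (b i) - f n (b i)| := by
            refine Finset.sum_congr rfl fun i _ => ?_
            rw [abs_mul, abs_of_nonneg (hw i).1]
    calc ∑ n ∈ S, |g (n+1) - g n|
        ≤ ∑ n ∈ S, ∑ i, w i * |f (n+1) (b i) - f n (b i)| :=
          Finset.sum_le_sum fun n _ => h1 n
      _ = ∑ i, w i * ∑ n ∈ S, |f (n+1) (b i) - f n (b i)| := by
          rw [Finset.sum_comm]; simp [Finset.mul_sum]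
      _ ≤ ∑ i, w i * (m:ℝ) := by
          refine Finset.sum_le_sum fun i _ => mul_le_mul_of_nonneg_left ?_ (hw i).1
          obtain ⟨hfin, hcard⟩ := hchange (b i)
          have hsub : S.filter (fun n => f n (b i) ≠ f (n+1) (b i)) ⊆ hfin.toFinset := by
            intro n hn
            simp only [Finset.mem_filter] at hn
            simpa using hn.2
          calc ∑ n ∈ S, |f (n+1) (b i) - f n (b i)|
              ≤ ∑ n ∈ S.filter (fun n => f n (b i) ≠ f (n+1) (b i)), 1 := by
                rw [Finset.sum_filter]
                refine Finset.sum_le_sum fun n _ => ?_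
                by_cases h : f n (b i) = f (n+1) (b i)
                · simp [h]
                · rw [if_pos h]
                  rcases hf01 n (b i) with h0 | h0 <;>
                    rcases hf01 (n+1) (b i) with h1 | h1 <;>
                    simp [h0, h1]
            _ = ((S.filter (fun n => f n (b i) ≠ f (n+1) (b i))).card : ℝ) := by simp
            _ ≤ ((hfin.toFinset.card : ℕ) : ℝ) := by
                exact_mod_cast Finset.card_le_card hsub
            _ ≤ (m:ℝ) := by
                rw [Set.ncard_eq_toFinset_card _ hfin] at hcard
                exact_mod_cast hcard
      _ = (m:ℝ) := by rw [← Finset.sum_mul, hwsum, one_mul]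
  -- telescoping triangle inequality
  have htel : ∀ a c : ℕ, a ≤ c → |g c - g a| ≤ ∑ n ∈ Finset.Ico a c, |g (n+1) - g n| := by
    intro a c hac
    induction c, hac using Nat.le_induction with
    | base => simp
    | succ c hac ih =>
      rw [Finset.sum_Ico_succ_top hac]
      have h3 := abs_sub_le (g (c+1)) (g c) (g a)
      linarith [abs_sub_comm (g (c+1)) (g c)]
  -- index function
  have hNlt : N - 1 < N := by omega
  set J : ℕ → ℕ := fun t => j ⟨min t (N-1), lt_of_le_of_lt (min_le_right _ _) hNlt⟩ with hJ
  have hJmono : Monotone J := by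
    intro t t' htt
    exact hj.monotone (by simp [Fin.mk_le_mk]; omega)
  have hJval : ∀ t (ht : t ≤ N - 1), J t = j ⟨t, lt_of_le_of_lt ht hNlt⟩ := by
    intro t ht
    simp [hJ, min_eq_left ht]
  have hsum : ∀ T, ∑ t ∈ Finset.range T, ∑ n ∈ Finset.Ico (J t) (J (t+1)), |g (n+1) - g n|
      = ∑ n ∈ Finset.Ico (J 0) (J T), |g (n+1) - g n| := by
    intro T
    induction T with
    | zero => simp
    | succ T ih =>
      rw [Finset.sum_range_succ, ih,
        Finset.sum_Ico_consecutive _ (hJmono (Nat.zero_le T)) (hJmono (Nat.le_succ T))]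
  have key : ((N-1 : ℕ) : ℝ) * (s - r) ≤ (m : ℝ) := by
    calc ((N-1:ℕ):ℝ) * (s-r) = ∑ _t ∈ Finset.range (N-1), (s-r) := by
          simp [mul_comm]; ring
      _ ≤ ∑ t ∈ Finset.range (N-1), |g (J (t+1)) - g (J t)| := by
          refine Finset.sum_le_sum fun t ht => ?_
          rw [Finset.mem_range] at ht
          have h1 : J t = j ⟨t, by omega⟩ := hJval t (by omega)
          have h2 : J (t+1) = j ⟨t+1, by omega⟩ := hJval (t+1) (by omega)
          have ha := halt ⟨t, by omega⟩
          have hb := halt ⟨t+1, by omega⟩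
          simp only at ha hb
          rcases Nat.even_or_odd t with he | ho
          · have e1 := ha.1 he
            have e2 := hb.2 (by simp [Nat.even_add_one, he])
            rw [h1, h2]
            have : s - r ≤ g (j ⟨t+1, by omega⟩) - g (j ⟨t, by omega⟩) := by
              simp only [hg]; linarith
            exact le_trans this (le_abs_self _)
          · have e1 := ha.2 (Nat.not_even_iff_odd.mpr ho)
            have e2 := hb.1 (Nat.even_add_one.mpr (Nat.not_even_iff_odd.mpr ho))
            rw [h1, h2, abs_sub_comm]
            have : s - r ≤ g (j ⟨t, by omega⟩) - g (j ⟨t+1, by omega⟩) := by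
              simp only [hg]; linarith
            exact le_trans this (le_abs_self _)
      _ ≤ ∑ t ∈ Finset.range (N-1), ∑ n ∈ Finset.Ico (J t) (J (t+1)), |g (n+1) - g n| :=
          Finset.sum_le_sum fun t _ => htel _ _ (hJmono (Nat.le_succ t))
      _ = ∑ n ∈ Finset.Ico (J 0) (J (N-1)), |g (n+1) - g n| := hsum (N-1)
      _ ≤ (m:ℝ) := hvar _
  have hcast : ((N-1 : ℕ) : ℝ) = (N:ℝ) - 1 := by
    push_cast [Nat.cast_sub (by omega : 1 ≤ N)]; ring
  rw [hcast, ← le_div_iff₀ hpos] at key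
  linarith
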